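/- Suppose t̃_k ∈ Ω for all k ∈ {1,…,m}. Then for every real 1 ≤ p < ∞, the Dirichlet interpolation error satisfies ‖f̃ − Sf‖_p ≤ 2 m^{1/p} Σ_{|ℓ|>Ñ} |c_ℓ|, where ‖·‖_p denotes the entrywise p-norm on ℂ^m. -/

import Mathlib

open scoped BigOperators
open MeasureTheory Matrix

noncomputable section

/-- The complex exponential `e(x) = exp(2πix)`. -/
def ce (x : ℝ) : ℂ := Complex.exp (2 * Real.pi * Complex.I * x)

/-- Half-bandwidth `Ñ = (N-1)/2`. -/
def Nt (N : ℕ) : ℤ := ((N : ℤ) - 1) / 2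

/-- Uniform grid point `t_p = (p-1)/N - 1/2` (zero-based index). -/
def tg (N : ℕ) (p : Fin N) : ℝ := (p : ℝ) / N - 1 / 2

/-- Dirichlet interpolation matrix `S ∈ ℂ^{m×N}`. -/
def dirS (N m : ℕ) (tt : Fin m → ℝ) : Matrix (Fin m) (Fin N) ℂ :=
  fun k p => (N : ℂ)⁻¹ * ∑ u ∈ Finset.Icc (-(Nt N)) (Nt N), ce (u * (tg N p - tt k))

/-- Centered DFT matrix `F ∈ ℂ^{N×N}`. -/
def dftF (N : ℕ) : Matrix (Fin N) (Fin N) ℂ :=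
  fun p u => ((Real.sqrt N : ℂ))⁻¹ * ce (-(tg N p) * ((u : ℤ) - Nt N))

/-- DFT-incoherence parameter of `Ψ`. -/
def dftIncoh (N n : ℕ) (Ψ : Matrix (Fin N) (Fin n) ℂ) : ℝ :=
  ⨆ ℓ : Fin n, ∑ k : Fin N, ‖((dftF N)ᴴ * Ψ) k ℓ‖

/-- Euclidean norm on `ℂ^n`. -/
def norm2 {n : ℕ} (v : Fin n → ℂ) : ℝ := Real.sqrt (∑ i, ‖v i‖ ^ 2)

/-- `ℓ₁` norm on `ℂ^n`. -/
def norm1 {n : ℕ} (v : Fin n → ℂ) : ℝ := ∑ i, ‖v i‖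

/-- `v` has at most `s` nonzero entries. -/
def Sparse {n : ℕ} (s : ℕ) (v : Fin n → ℂ) : Prop :=
  (Finset.univ.filter fun i => v i ≠ 0).card ≤ s

/-- Error of the best `s`-sparse approximation of `g` in `ℓ₁`. -/
def sperr {n : ℕ} (s : ℕ) (g : Fin n → ℂ) : ℝ :=
  sInf {r : ℝ | ∃ h : Fin n → ℂ, Sparse s h ∧ r = norm1 (fun i => h i - g i)}

/-- The 1-periodic signal with Fourier coefficients `c`. -/
def fcont (c : ℤ → ℂ) (x : ℝ) : ℂ := ∑' ℓ : ℤ, c ℓ * ce (ℓ * x)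

/-- Tail `∑_{|ℓ|>Ñ} |c_ℓ|` of the Fourier coefficients. -/
def tailSum (N : ℕ) (c : ℤ → ℂ) : ℝ :=
  ∑' ℓ : ℤ, if Nt N < |ℓ| then ‖c ℓ‖ else 0

/-- The distribution `𝒟` satisfies the deviation model with parameter `θ`. -/
def DevModel (N m : ℕ) (𝒟 : Measure ℝ) (θ : ℝ) : Prop :=
  ∀ j : ℤ, j ≠ 0 → (|j| : ℝ) ≤ 2 * ((N : ℝ) - 1) / m →
    (2 * N / m) * ‖∫ x, ce (((j * m : ℤ) : ℝ) * x) ∂𝒟‖ ≤ θ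

/-- The random nonuniform sample points `t̃_k = (k-1)/m - 1/2 + Δ_k`. -/
def samplePts {Ω : Type*} (m : ℕ) (Δ : Fin m → Ω → ℝ) (ω : Ω) : Fin m → ℝ :=
  fun k => (k : ℝ) / m - 1 / 2 + Δ k ω

end

section aux
open Finset

lemma ce_add' (x y : ℝ) : ce (x + y) = ce x * ce y := by
  simp [ce, ← Complex.exp_add]; ring_nf

lemma ce_abs' (x : ℝ) : ‖ce x‖ = 1 := by
  simp [ce, Complex.norm_exp]

lemma ce_int' (n : ℤ) : ce n = 1 := by
  rw [ce, Complex.exp_eq_one_iff]; exact ⟨n, by push_cast; ring⟩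

lemma ce_nsmul' (n : ℕ) (x : ℝ) : ce x ^ n = ce (n * x) := by
  rw [ce, ce, ← Complex.exp_nat_mul]; push_cast; ring_nf

lemma ce_eq_one_iff' (x : ℝ) : ce x = 1 ↔ ∃ n : ℤ, x = n := by
  rw [ce, Complex.exp_eq_one_iff]
  constructor
  · rintro ⟨n, hn⟩
    refine ⟨n, ?_⟩
    have hI : (2 * Real.pi * Complex.I) ≠ 0 := by
      simp [Real.pi_ne_zero, Complex.I_ne_zero]
    have : (x : ℂ) = n := by
      have h2 : (2 * Real.pi * Complex.I) * x = (2 * Real.pi * Complex.I) * n := by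
        rw [hn]; ring
      exact mul_left_cancel₀ hI h2
    exact_mod_cast this
  · rintro ⟨n, hn⟩
    exact ⟨n, by rw [hn]; push_cast; ring⟩

lemma sum_ce_geom (N : ℕ) (hN : 0 < N) (a : ℤ) :
    ∑ q : Fin N, ce ((a : ℝ) * q / N) = if (N:ℤ) ∣ a then (N:ℂ) else 0 := by
  have key : ∀ q : Fin N, ce ((a : ℝ) * q / N) = ce ((a:ℝ)/N) ^ (q:ℕ) := by
    intro q; rw [ce_nsmul']; ring_nf
  rw [Finset.sum_congr rfl (fun q _ => key q), Fin.sum_univ_eq_sum_range]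
  by_cases h : (N:ℤ) ∣ a
  · obtain ⟨b, rfl⟩ := h
    have h1 : ce ((((N:ℤ)*b : ℤ) :ℝ)/N) = 1 := by
      have h2 : (((N:ℤ)*b : ℤ) :ℝ)/N = (b:ℝ) := by push_cast; field_simp
      rw [h2]; exact_mod_cast ce_int' b
    rw [if_pos (dvd_mul_right _ _)]
    simp only [h1, one_pow, Finset.sum_const, Finset.card_range, nsmul_eq_mul, mul_one]
  · rw [if_neg h]
    have hz1 : ce ((a:ℝ)/N) ≠ 1 := by
      rw [Ne, ce_eq_one_iff']
      rintro ⟨n, hn⟩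
      apply h
      refine ⟨n, ?_⟩
      have : (a:ℝ) = N * n := by field_simp at hn; linarith
      exact_mod_cast this
    rw [geom_sum_eq hz1]
    have h3 : ce ((a:ℝ)/N) ^ N = 1 := by
      rw [ce_nsmul']
      have : (N:ℝ) * ((a:ℝ)/N) = (a:ℝ) := by field_simp
      rw [this]; exact_mod_cast ce_int' a
    simp [h3]

lemma sum_ce_tg (N : ℕ) (hN : 0 < N) (a : ℤ) :
    ∑ q : Fin N, ce ((a : ℝ) * tg N q)
      = if (N:ℤ) ∣ a then (N:ℂ) * ce (-(a:ℝ)/2) else 0 := by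
  have key : ∀ q : Fin N, ce ((a : ℝ) * tg N q) = ce (-(a:ℝ)/2) * ce ((a:ℝ) * q / N) := by
    intro q
    rw [← ce_add']
    congr 1
    simp only [tg]; ring
  rw [Finset.sum_congr rfl (fun q _ => key q), ← Finset.mul_sum, sum_ce_geom N hN a]
  split <;> ring

/-- The unique `u ∈ [-Ñ, Ñ]` with `N ∣ u + ℓ`. -/
def u0 (N : ℕ) (ℓ : ℤ) : ℤ := (Nt N - ℓ) % N - Nt N

lemma NtwoNt (N : ℕ) (hN : Odd N) : (N : ℤ) = 2 * Nt N + 1 := by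
  obtain ⟨k, hk⟩ := hN
  have : (N:ℤ) = 2*k+1 := by exact_mod_cast hk
  rw [this]; unfold Nt; rw [this]; omega

lemma u0_dvd (N : ℕ) (ℓ : ℤ) : (N:ℤ) ∣ u0 N ℓ + ℓ := by
  unfold u0
  have := Int.mul_ediv_add_emod (Nt N - ℓ) N
  exact ⟨-((Nt N - ℓ) / N), by linarith⟩

lemma u0_mem (N : ℕ) (hN : Odd N) (ℓ : ℤ) :
    u0 N ℓ ∈ Finset.Icc (-(Nt N)) (Nt N) := by
  have h2 := NtwoNt N hN
  have hNpos : (0:ℤ) < (N:ℤ) := by omega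
  have h1 : 0 ≤ (Nt N - ℓ) % N := Int.emod_nonneg _ (by omega)
  have h3 : (Nt N - ℓ) % N < N := Int.emod_lt_of_pos _ hNpos
  simp only [Finset.mem_Icc, u0]; omega

lemma u0_uniq (N : ℕ) (hN : Odd N) (ℓ u : ℤ)
    (hu : u ∈ Finset.Icc (-(Nt N)) (Nt N)) (hd : (N:ℤ) ∣ u + ℓ) : u = u0 N ℓ := by
  have h2 := NtwoNt N hN
  have hmem := u0_mem N hN ℓ
  simp only [Finset.mem_Icc] at hu hmem
  have hd2 := u0_dvd N ℓ
  have : (N:ℤ) ∣ u - u0 N ℓ := by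
    have := dvd_sub hd hd2; simpa using this
  obtain ⟨t, ht⟩ := this
  have ht0 : t = 0 := by nlinarith [hu.1, hu.2, hmem.1, hmem.2]
  rw [ht0, mul_zero] at ht
  omega

lemma u0_small (N : ℕ) (hN : Odd N) (ℓ : ℤ) (h : |ℓ| ≤ Nt N) : u0 N ℓ = -ℓ := by
  have h2 := NtwoNt N hN
  refine (u0_uniq N hN ℓ (-ℓ) ?_ (by simp)).symm
  simp only [Finset.mem_Icc]
  rw [abs_le] at h; omega


lemma summable_ce (c : ℤ → ℂ) (hc : Summable fun ℓ : ℤ => ‖c ℓ‖) (x : ℝ) :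
    Summable (fun ℓ : ℤ => c ℓ * ce ((ℓ:ℝ) * x)) := by
  apply Summable.of_norm
  simpa [_root_.map_mul, ce_abs'] using hc

lemma pointwise_bound (N : ℕ) (hN : Odd N) (hNpos : 0 < N)
    (c : ℤ → ℂ) (hc : Summable fun ℓ : ℤ => ‖c ℓ‖) (T : ℝ) :
    ‖(∑' ℓ : ℤ, c ℓ * ce ((ℓ:ℝ) * T)) -
      ∑ q : Fin N, ((N:ℂ)⁻¹ * ∑ u ∈ Finset.Icc (-(Nt N)) (Nt N),
          ce ((u:ℝ) * (tg N q - T))) * (∑' ℓ : ℤ, c ℓ * ce ((ℓ:ℝ) * tg N q))‖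
      ≤ 2 * (∑' ℓ : ℤ, if Nt N < |ℓ| then ‖c ℓ‖ else 0) := by
  set g : ℤ → ℂ := fun ℓ =>
    ce ((-(u0 N ℓ) : ℤ) * T) * ce (-(((u0 N ℓ + ℓ : ℤ)):ℝ)/2) with hg
  have hgabs : ∀ ℓ, ‖g ℓ‖ = 1 := by
    intro ℓ; simp [hg, _root_.map_mul, ce_abs']
  -- Step B : per-frequency value of the interpolation
  have stepB : ∀ ℓ : ℤ,
      (∑ q : Fin N, ((N:ℂ)⁻¹ * ∑ u ∈ Finset.Icc (-(Nt N)) (Nt N),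
          ce ((u:ℝ) * (tg N q - T))) * (c ℓ * ce ((ℓ:ℝ) * tg N q)))
        = c ℓ * g ℓ := by
    intro ℓ
    have e1 : ∀ q : Fin N, ((N:ℂ)⁻¹ * ∑ u ∈ Finset.Icc (-(Nt N)) (Nt N),
          ce ((u:ℝ) * (tg N q - T))) * (c ℓ * ce ((ℓ:ℝ) * tg N q))
        = c ℓ * (N:ℂ)⁻¹ * ∑ u ∈ Finset.Icc (-(Nt N)) (Nt N),
            ce (-((u:ℝ) * T)) * ce (((u + ℓ : ℤ):ℝ) * tg N q) := by
      intro q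
      rw [Finset.mul_sum, Finset.sum_mul, Finset.mul_sum]
      refine Finset.sum_congr rfl (fun u _ => ?_)
      have hce : ce ((u:ℝ) * (tg N q - T)) * ce ((ℓ:ℝ) * tg N q)
          = ce (-((u:ℝ) * T)) * ce (((u + ℓ : ℤ):ℝ) * tg N q) := by
        rw [← ce_add', ← ce_add']
        congr 1
        push_cast; ring
      calc ((N:ℂ)⁻¹ * ce ((u:ℝ) * (tg N q - T))) * (c ℓ * ce ((ℓ:ℝ) * tg N q))
          = c ℓ * (N:ℂ)⁻¹ * (ce ((u:ℝ) * (tg N q - T)) * ce ((ℓ:ℝ) * tg N q)) := by ring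
        _ = c ℓ * (N:ℂ)⁻¹ * (ce (-((u:ℝ) * T)) * ce (((u + ℓ : ℤ):ℝ) * tg N q)) := by rw [hce]
    rw [Finset.sum_congr rfl (fun q _ => e1 q), ← Finset.mul_sum, Finset.sum_comm]
    have e2 : ∀ u ∈ Finset.Icc (-(Nt N)) (Nt N),
        (∑ q : Fin N, ce (-((u:ℝ) * T)) * ce (((u + ℓ : ℤ):ℝ) * tg N q))
        = ce (-((u:ℝ) * T)) *
            (if (N:ℤ) ∣ u + ℓ then (N:ℂ) * ce (-(((u+ℓ:ℤ)):ℝ)/2) else 0) := by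
      intro u _
      rw [← Finset.mul_sum, sum_ce_tg N hNpos (u + ℓ)]
    rw [Finset.sum_congr rfl e2]
    rw [Finset.sum_eq_single_of_mem (u0 N ℓ) (u0_mem N hN ℓ)
      (fun u hu hne => by
        rw [if_neg (fun hd => hne (u0_uniq N hN ℓ u hu hd)), mul_zero])]
    rw [if_pos (u0_dvd N ℓ)]
    have hNne : (N:ℂ) ≠ 0 := Nat.cast_ne_zero.mpr hNpos.ne'
    field_simp [hg]
    simp only [hg]
    rw [mul_assoc, ← ce_add', ← ce_add']
    congr 2
    push_cast; ring
  -- Step A : swap sum and tsum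
  have hsum : ∀ x : ℝ, Summable (fun ℓ : ℤ => c ℓ * ce ((ℓ:ℝ) * x)) := summable_ce c hc
  have stepA : (∑ q : Fin N, ((N:ℂ)⁻¹ * ∑ u ∈ Finset.Icc (-(Nt N)) (Nt N),
          ce ((u:ℝ) * (tg N q - T))) * (∑' ℓ : ℤ, c ℓ * ce ((ℓ:ℝ) * tg N q)))
      = ∑' ℓ : ℤ, c ℓ * g ℓ := by
    have e3 : ∀ q : Fin N, ((N:ℂ)⁻¹ * ∑ u ∈ Finset.Icc (-(Nt N)) (Nt N),
          ce ((u:ℝ) * (tg N q - T))) * (∑' ℓ : ℤ, c ℓ * ce ((ℓ:ℝ) * tg N q))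
        = ∑' ℓ : ℤ, ((N:ℂ)⁻¹ * ∑ u ∈ Finset.Icc (-(Nt N)) (Nt N),
          ce ((u:ℝ) * (tg N q - T))) * (c ℓ * ce ((ℓ:ℝ) * tg N q)) := by
      intro q; rw [tsum_mul_left]
    rw [Finset.sum_congr rfl (fun q _ => e3 q)]
    rw [← Summable.tsum_finsetSum (fun q _ => (hsum (tg N q)).mul_left _)]
    exact tsum_congr stepB
  rw [stepA]
  -- Step C,D : bound the difference
  have hgs : Summable (fun ℓ : ℤ => c ℓ * g ℓ) := by
    apply Summable.of_norm
    simpa [_root_.map_mul, hgabs] using hc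
  rw [← Summable.tsum_sub (hsum T) hgs]
  have e4 : ∀ ℓ : ℤ, c ℓ * ce ((ℓ:ℝ) * T) - c ℓ * g ℓ = c ℓ * (ce ((ℓ:ℝ) * T) - g ℓ) := by
    intro ℓ; ring
  rw [tsum_congr e4]
  have hdiff : Summable (fun ℓ : ℤ => c ℓ * (ce ((ℓ:ℝ) * T) - g ℓ)) :=
    ((hsum T).sub hgs).congr e4
  calc ‖∑' ℓ : ℤ, c ℓ * (ce ((ℓ:ℝ) * T) - g ℓ)‖
      ≤ ∑' ℓ : ℤ, ‖c ℓ * (ce ((ℓ:ℝ) * T) - g ℓ)‖ :=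
        norm_tsum_le_tsum_norm hdiff.norm
    _ ≤ ∑' ℓ : ℤ, (if Nt N < |ℓ| then 2 * ‖c ℓ‖ else 0) := by
        apply Summable.tsum_le_tsum _ hdiff.norm
        · apply Summable.of_nonneg_of_le (fun ℓ => by positivity)
            (fun ℓ => by split <;> simp [norm_nonneg]) (hc.mul_left 2)
        · intro ℓ
          by_cases h : Nt N < |ℓ|
          · rw [if_pos h, norm_mul]
            have : ‖ce ((ℓ:ℝ) * T) - g ℓ‖ ≤ 2 := by
              calc ‖ce ((ℓ:ℝ) * T) - g ℓ‖ ≤ ‖ce ((ℓ:ℝ) * T)‖ + ‖g ℓ‖ := norm_sub_le _ _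
                _ = 2 := by rw [ce_abs', hgabs]; norm_num
            calc ‖c ℓ‖ * ‖ce ((ℓ:ℝ) * T) - g ℓ‖ ≤ ‖c ℓ‖ * 2 :=
                  mul_le_mul_of_nonneg_left this (norm_nonneg _)
              _ = 2 * ‖c ℓ‖ := by ring
          · rw [if_neg h]
            push_neg at h
            have hu : u0 N ℓ = -ℓ := u0_small N hN ℓ h
            have : g ℓ = ce ((ℓ:ℝ) * T) := by
              rw [hg]
              simp only [hu]
              rw [neg_neg, neg_add_cancel]
              norm_num
              have : ce ((0:ℤ):ℝ) = 1 := ce_int' 0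
              simp at this
              rw [this, mul_one]
            rw [this, sub_self, mul_zero, norm_zero]
    _ = 2 * (∑' ℓ : ℤ, if Nt N < |ℓ| then ‖c ℓ‖ else 0) := by
        rw [← tsum_mul_left]
        exact tsum_congr (fun ℓ => by split <;> ring)


end aux

/-- entrywise `p`-norm bound `‖f̃ - Sf‖_p ≤ 2 m^{1/p} ∑_{|ℓ|>Ñ}|c_ℓ|`
for every real `1 ≤ p < ∞`, when all sample points lie in `Ω = [-1/2, 1/2)`. -/
theorem dirichlet_interp_error_pnorm
    (N m : ℕ) (hN : Odd N) (hNpos : 0 < N) (hm : 0 < m)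
    (c : ℤ → ℂ) (hc : Summable fun ℓ : ℤ => ‖c ℓ‖)
    (tt : Fin m → ℝ)
    (hΩ : ∀ k : Fin m, tt k ∈ Set.Ico (-(1/2) : ℝ) (1/2))
    (p : ℝ) (hp : 1 ≤ p) :
    (∑ k : Fin m, ‖
        fcont c (tt k) - (dirS N m tt).mulVec (fun q => fcont c (tg N q)) k‖ ^ p)
      ^ (1 / p) ≤ 2 * (m : ℝ) ^ (1 / p) * tailSum N c := by
  set B : ℝ := 2 * tailSum N c with hB
  have htail : 0 ≤ tailSum N c := tsum_nonneg (fun ℓ => by positivity)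
  have hBnn : 0 ≤ B := by positivity
  have hE : ∀ k : Fin m, ‖fcont c (tt k) - (dirS N m tt).mulVec (fun q => fcont c (tg N q)) k‖ ≤ B := by
    intro k
    have hmv : (dirS N m tt).mulVec (fun q => fcont c (tg N q)) k
        = ∑ q : Fin N, ((N:ℂ)⁻¹ * ∑ u ∈ Finset.Icc (-(Nt N)) (Nt N),
            ce ((u:ℝ) * (tg N q - tt k))) * (∑' ℓ : ℤ, c ℓ * ce ((ℓ:ℝ) * tg N q)) := by
      simp [Matrix.mulVec, dotProduct, dirS, fcont]
    rw [hmv]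
    exact pointwise_bound N hN hNpos c hc (tt k)
  have hppos : 0 < p := lt_of_lt_of_le one_pos hp
  have h1p : 0 ≤ 1 / p := by positivity
  have hsum : (∑ k : Fin m, ‖fcont c (tt k) - (dirS N m tt).mulVec (fun q => fcont c (tg N q)) k‖ ^ p)
      ≤ (m : ℝ) * B ^ p := by
    calc (∑ k : Fin m, ‖fcont c (tt k) - (dirS N m tt).mulVec (fun q => fcont c (tg N q)) k‖ ^ p)
        ≤ ∑ _k : Fin m, B ^ p :=
          Finset.sum_le_sum (fun k _ =>
            Real.rpow_le_rpow (norm_nonneg _) (hE k) hppos.le)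
      _ = (m : ℝ) * B ^ p := by simp [mul_comm]
  have hnn : 0 ≤ ∑ k : Fin m, ‖fcont c (tt k) - (dirS N m tt).mulVec (fun q => fcont c (tg N q)) k‖ ^ p :=
    Finset.sum_nonneg (fun k _ => Real.rpow_nonneg (norm_nonneg _) p)
  calc (∑ k : Fin m, ‖fcont c (tt k) - (dirS N m tt).mulVec (fun q => fcont c (tg N q)) k‖ ^ p) ^ (1/p)
      ≤ ((m : ℝ) * B ^ p) ^ (1/p) := Real.rpow_le_rpow hnn hsum h1p
    _ = (m : ℝ) ^ (1/p) * B := by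
        rw [Real.mul_rpow (Nat.cast_nonneg m) (Real.rpow_nonneg hBnn p),
          ← Real.rpow_mul hBnn, mul_one_div, div_self hppos.ne', Real.rpow_one]
    _ = 2 * (m : ℝ) ^ (1/p) * tailSum N c := by rw [hB]; ring
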